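/- Let E ⊆ ℝ^n be a Lebesgue-measurable set and f : E → ℝ^n a measurable mapping that is approximately differentiable at almost every point of E. Then there exist a set Σ ⊆ E with λ(Σ) = 0 and a measurable map L from E to the n × n real matrices such that L(x) is an approximate differential of f at every x ∈ E \ Σ, and for every measurable function u : ℝ^n → [0, ∞] the area formula holds: ∫_E u(x) |det L(x)| dλ(x) = ∫_{ℝ^n} ( ∑_{x ∈ f⁻¹(y) ∩ (E \ Σ)} u(x) ) dλ(y). -/

import Mathlib

open MeasureTheory Metric Filter Set Function
open scoped Topology ENNReal NNReal

/-- `Y` has density `d` at the point `x` with respect to the measure `μ`. -/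
def HasDensityAt {X : Type*} [PseudoMetricSpace X] [MeasurableSpace X]
    (μ : Measure X) (Y : Set X) (x : X) (d : ℝ≥0∞) : Prop :=
  Tendsto (fun r : ℝ => μ (Y ∩ ball x r) / μ (ball x r)) (𝓝[>] (0 : ℝ)) (𝓝 d)

/-- `L` is an approximate differential of `f` (as a map defined on `E`) at `a`. -/
def IsApproxDifferential {n m : ℕ} (E : Set (EuclideanSpace ℝ (Fin n)))
    (f : EuclideanSpace ℝ (Fin n) → EuclideanSpace ℝ (Fin m))
    (a : EuclideanSpace ℝ (Fin n))
    (L : EuclideanSpace ℝ (Fin n) →ₗ[ℝ] EuclideanSpace ℝ (Fin m)) : Prop :=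
  ∀ ε : ℝ, 0 < ε →
    HasDensityAt volume {x ∈ E | ε * ‖x - a‖ < ‖f x - f a - L (x - a)‖} a 0


section AuxAF
variable {n : ℕ}
local notation "V" => EuclideanSpace ℝ (Fin n)
local notation "μ" => (volume : Measure (EuclideanSpace ℝ (Fin n)))

lemma AF.ball_pos (x : V) {r : ℝ} (hr : 0 < r) : 0 < μ (ball x r) :=
  measure_ball_pos _ _ hr

lemma AF.ball_ne_top (x : V) (r : ℝ) : μ (ball x r) ≠ ∞ := measure_ball_lt_top.ne

lemma AF.inter_ball_eq_closedBall (S : Set V) (x : V) {r : ℝ} (hr : r ≠ 0) :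
    μ (S ∩ ball x r) = μ (S ∩ closedBall x r) := by
  refine le_antisymm (measure_mono (inter_subset_inter_right _ ball_subset_closedBall)) ?_
  calc μ (S ∩ closedBall x r) ≤ μ ((S ∩ ball x r) ∪ sphere x r) := by
        refine measure_mono ?_
        rw [← ball_union_sphere]
        rintro y ⟨hyS, hy⟩
        rcases hy with h | h
        · exact Or.inl ⟨hyS, h⟩
        · exact Or.inr h
    _ ≤ μ (S ∩ ball x r) + μ (sphere x r) := measure_union_le _ _
    _ = μ (S ∩ ball x r) := by
        rw [Measure.addHaar_sphere_of_ne_zero _ _ hr, add_zero]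

lemma AF.ball_eq_closedBall (x : V) {r : ℝ} (hr : r ≠ 0) :
    μ (ball x r) = μ (closedBall x r) := by
  simpa using AF.inter_ball_eq_closedBall univ x hr

lemma AF.hasDensityAt_zero_of_null {S : Set V} {a : V} (h : μ S = 0) :
    HasDensityAt μ S a 0 := by
  have : (fun r : ℝ => μ (S ∩ ball a r) / μ (ball a r)) = fun _ => 0 := by
    funext r
    rw [measure_mono_null inter_subset_left h, ENNReal.zero_div]
  rw [HasDensityAt, this]
  exact tendsto_const_nhds

lemma AF.hasDensityAt_zero_mono {S T : Set V} {a : V} (hST : S ⊆ T)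
    (h : HasDensityAt μ T a 0) : HasDensityAt μ S a 0 := by
  refine tendsto_of_tendsto_of_tendsto_of_le_of_le tendsto_const_nhds h
    (fun r => zero_le) fun r => ?_
  exact ENNReal.div_le_div_right
    (measure_mono (inter_subset_inter_left _ hST)) _

lemma AF.hasDensityAt_zero_union {S T : Set V} {a : V}
    (hS : HasDensityAt μ S a 0) (hT : HasDensityAt μ T a 0) :
    HasDensityAt μ (S ∪ T) a 0 := by
  have h := hS.add hT
  rw [add_zero] at h
  refine tendsto_of_tendsto_of_tendsto_of_le_of_le tendsto_const_nhds h
    (fun r => zero_le) fun r => ?_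
  rw [union_inter_distrib_right, ENNReal.div_add_div_same]
  exact ENNReal.div_le_div_right (measure_union_le _ _) _

/-- If a measurable set `B` has density 1 at `a` (w.r.t. balls), then any set disjoint
from `B` has density 0 at `a`. -/
lemma AF.hasDensityAt_zero_of_disjoint {B S : Set V} {a : V} (hB : MeasurableSet B)
    (h1 : Tendsto (fun r : ℝ => μ (B ∩ ball a r) / μ (ball a r)) (𝓝[>] (0 : ℝ)) (𝓝 1))
    (hdisj : Disjoint S B) : HasDensityAt μ S a 0 := by
  have key : Tendsto (fun r : ℝ => 1 - μ (B ∩ ball a r) / μ (ball a r)) (𝓝[>] (0 : ℝ))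
      (𝓝 0) := by
    have hc : ContinuousAt (fun x : ℝ≥0∞ => 1 - x) 1 :=
      (ENNReal.continuous_sub_left (by norm_num)).continuousAt
    have := hc.tendsto.comp h1
    simpa [Function.comp_def] using this
  refine tendsto_of_tendsto_of_tendsto_of_le_of_le' tendsto_const_nhds key
    (Eventually.of_forall fun r => zero_le) ?_
  filter_upwards [self_mem_nhdsWithin] with r (hr : 0 < r)
  have hb0 : μ (ball a r) ≠ 0 := (AF.ball_pos a hr).ne'
  have hbt : μ (ball a r) ≠ ∞ := AF.ball_ne_top a r
  have hadd : μ (ball a r ∩ B) + μ (ball a r \ B) = μ (ball a r) :=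
    measure_inter_add_diff _ hB
  have hSsub : μ (S ∩ ball a r) ≤ μ (ball a r \ B) := by
    refine measure_mono fun y hy => ⟨hy.2, fun hyB => ?_⟩
    exact (hdisj.ne_of_mem hy.1 hyB) rfl
  have hdiff : μ (ball a r \ B) / μ (ball a r)
      = 1 - μ (B ∩ ball a r) / μ (ball a r) := by
    have h2 : μ (B ∩ ball a r) / μ (ball a r) + μ (ball a r \ B) / μ (ball a r) = 1 := by
      rw [ENNReal.div_add_div_same, inter_comm, hadd, ENNReal.div_self hb0 hbt]
    refine ENNReal.eq_sub_of_add_eq ?_ ?_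
    · exact fun h => hbt (by
        have := ENNReal.div_eq_top.1 h
        rcases this with ⟨_, h0⟩ | ⟨h1', _⟩
        · exact absurd h0 hb0
        · exact absurd (eq_top_iff.2 (le_trans (le_top.trans_eq h1'.symm)
            (measure_mono inter_subset_right))) hbt)
    · rw [add_comm] at h2; exact h2
  rw [← hdiff]
  exact ENNReal.div_le_div_right hSsub _

/-- transfer density-one statements from closed balls to open balls -/
lemma AF.tendsto_ball_of_closedBall {B : Set V} {a : V}
    (h : Tendsto (fun r : ℝ => μ (B ∩ closedBall a r) / μ (closedBall a r)) (𝓝[>] (0 : ℝ))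
      (𝓝 1)) :
    Tendsto (fun r : ℝ => μ (B ∩ ball a r) / μ (ball a r)) (𝓝[>] (0 : ℝ)) (𝓝 1) := by
  refine h.congr' ?_
  filter_upwards [self_mem_nhdsWithin] with r (hr : 0 < r)
  rw [AF.inter_ball_eq_closedBall _ _ hr.ne', AF.ball_eq_closedBall _ hr.ne']

/-- scaling for balls: doubling the radius multiplies the measure by `2 ^ n`. -/
lemma AF.ball_double (x y : V) {r : ℝ} (hr : 0 < r) :
    μ (ball x (2 * r)) = 2 ^ n * μ (ball y r) := by
  rw [Measure.addHaar_ball_of_pos _ _ (by linarith : (0:ℝ) < 2 * r),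
    Measure.addHaar_ball_of_pos _ _ hr, finrank_euclideanSpace_fin]
  rw [mul_pow, ENNReal.ofReal_mul (by positivity), ← mul_assoc]
  congr 1
  rw [ENNReal.ofReal_pow (by norm_num : (0:ℝ) ≤ 2), ENNReal.ofReal_ofNat]

/-- The main covering lemma: an a.e. approximately differentiable measurable map
coincides a.e. with countably many Lipschitz maps. -/
lemma AF.exists_lipschitz_cover {E : Set V} (hE : MeasurableSet E)
    {f : V → V}
    (hap : ∀ᵐ a ∂μ, a ∈ E →
      ∃ L : V →ₗ[ℝ] V, IsApproxDifferential E f a L) :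
    ∃ g : ℕ → V → V, (∀ k, ∃ K : ℝ≥0, LipschitzWith K (g k)) ∧
      ∀ᵐ a ∂μ, a ∈ E → ∃ k, f a = g k a := by
  classical
  set δ : ℝ≥0∞ := ((2 : ℝ≥0∞) ^ (n + 2))⁻¹ with hδdef
  have h2n0 : ((2:ℝ≥0∞) ^ n) ≠ 0 := pow_ne_zero n (by norm_num)
  have h2nt : ((2:ℝ≥0∞) ^ n) ≠ ⊤ := ENNReal.pow_ne_top (by norm_num)
  have hδ0 : 0 < δ := ENNReal.inv_pos.2 (ENNReal.pow_ne_top (by norm_num))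
  have hδ2n : (2 : ℝ≥0∞) ^ n * δ = 4⁻¹ := by
    rw [hδdef, pow_add, ENNReal.mul_inv (Or.inl h2n0) (Or.inl h2nt), ← mul_assoc,
      ENNReal.mul_inv_cancel h2n0 h2nt, one_mul]
    norm_num
  -- the exceptional sets
  set S : ℕ → V → Set V := fun M a => {x | x ∈ E ∧ (M : ℝ) * ‖x - a‖ < ‖f x - f a‖}
    with hSdef
  -- good sets
  set G : ℕ → ℕ → Set V := fun M j =>
    {a | a ∈ E ∧ ∀ ρ : ℝ, 0 < ρ → ρ < 1 / (j + 1) →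
      μ (S M a ∩ ball a ρ) ≤ δ * μ (ball a ρ) ∧ μ (Eᶜ ∩ ball a ρ) ≤ δ * μ (ball a ρ)}
    with hGdef
  -- the Lipschitz estimate on good sets
  have key : ∀ (M j : ℕ) (a b : V), a ∈ G M j → b ∈ G M j →
      dist a b < 1 / (2 * (j + 1)) → dist (f a) (f b) ≤ 3 * M * dist a b := by
    intro M j a b ha hb hab
    rcases eq_or_ne a b with rfl | hne
    · simp
    set r := dist a b with hrdef
    have hr : 0 < r := dist_pos.2 hne
    have hrj : 2 * r < 1 / (j + 1) := by
      rw [lt_div_iff₀ (by positivity)] at hab ⊢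
      nlinarith
    have hrj' : r < 1 / (j + 1) := by linarith
    -- the bad set inside ball b r has measure at most (3/4) of the ball
    have hBa : μ (S M a ∩ ball b r) ≤ 4⁻¹ * μ (ball b r) := by
      have h1 : ball b r ⊆ ball a (2 * r) := by
        intro y hy
        have : dist y a ≤ dist y b + dist b a := dist_triangle _ _ _
        rw [mem_ball] at hy ⊢
        rw [dist_comm b a] at this
        nlinarith
      calc μ (S M a ∩ ball b r) ≤ μ (S M a ∩ ball a (2 * r)) :=
            measure_mono (inter_subset_inter_right _ h1)
        _ ≤ δ * μ (ball a (2 * r)) := (ha.2 _ (by linarith) hrj).1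
        _ = δ * (2 ^ n * μ (ball b r)) := by rw [AF.ball_double a b hr]
        _ = (2 ^ n * δ) * μ (ball b r) := by ring
        _ = 4⁻¹ * μ (ball b r) := by rw [hδ2n]
    have hBb : μ (S M b ∩ ball b r) ≤ 4⁻¹ * μ (ball b r) := by
      calc μ (S M b ∩ ball b r) ≤ δ * μ (ball b r) := (hb.2 _ hr hrj').1
        _ ≤ (2 ^ n * δ) * μ (ball b r) := by
            refine mul_le_mul_left ?_ _
            conv_lhs => rw [← one_mul δ]
            exact mul_le_mul_left (one_le_pow_of_one_le' (by norm_num) n) _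
        _ = 4⁻¹ * μ (ball b r) := by rw [hδ2n]
    have hBe : μ (Eᶜ ∩ ball b r) ≤ 4⁻¹ * μ (ball b r) := by
      calc μ (Eᶜ ∩ ball b r) ≤ δ * μ (ball b r) := (hb.2 _ hr hrj').2
        _ ≤ (2 ^ n * δ) * μ (ball b r) := by
            refine mul_le_mul_left ?_ _
            conv_lhs => rw [← one_mul δ]
            exact mul_le_mul_left (one_le_pow_of_one_le' (by norm_num) n) _
        _ = 4⁻¹ * μ (ball b r) := by rw [hδ2n]
    -- find a good point
    set bad : Set V := Eᶜ ∪ S M a ∪ S M b with hbaddef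
    have hgood : (ball b r \ bad).Nonempty := by
      rw [nonempty_iff_ne_empty]
      intro hemp
      have hcov : ball b r ⊆ (ball b r \ bad) ∪ ((Eᶜ ∩ ball b r) ∪ (S M a ∩ ball b r)
          ∪ (S M b ∩ ball b r)) := by
        intro y hy
        by_cases hyb : y ∈ bad
        · rcases hyb with (h | h) | h
          · exact Or.inr (Or.inl (Or.inl ⟨h, hy⟩))
          · exact Or.inr (Or.inl (Or.inr ⟨h, hy⟩))
          · exact Or.inr (Or.inr ⟨h, hy⟩)
        · exact Or.inl ⟨hy, hyb⟩
      have hb0 : μ (ball b r) ≠ 0 := (AF.ball_pos b hr).ne'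
      have hbt : μ (ball b r) ≠ ∞ := AF.ball_ne_top b r
      have : μ (ball b r) ≤ (4⁻¹ + 4⁻¹ + 4⁻¹ : ℝ≥0∞) * μ (ball b r) := by
        calc μ (ball b r) ≤ μ ((ball b r \ bad) ∪ ((Eᶜ ∩ ball b r) ∪ (S M a ∩ ball b r)
              ∪ (S M b ∩ ball b r))) := measure_mono hcov
          _ ≤ μ (ball b r \ bad) + (μ (Eᶜ ∩ ball b r) + μ (S M a ∩ ball b r)
              + μ (S M b ∩ ball b r)) := by
              refine (measure_union_le _ _).trans ?_
              gcongr
              refine (measure_union_le _ _).trans ?_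
              gcongr
              exact measure_union_le _ _
          _ ≤ 0 + (4⁻¹ * μ (ball b r) + 4⁻¹ * μ (ball b r) + 4⁻¹ * μ (ball b r)) := by
              rw [hemp]
              gcongr
              · exact le_of_eq measure_empty
          _ = (4⁻¹ + 4⁻¹ + 4⁻¹ : ℝ≥0∞) * μ (ball b r) := by ring
      have hlt : (4⁻¹ + 4⁻¹ + 4⁻¹ : ℝ≥0∞) * μ (ball b r) < 1 * μ (ball b r) := by
        rw [mul_comm _ (μ (ball b r)), mul_comm 1 (μ (ball b r))]
        refine ENNReal.mul_lt_mul_right hb0 hbt ?_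
        rw [show (4⁻¹ + 4⁻¹ + 4⁻¹ : ℝ≥0∞) = 3 / 4 by
          rw [ENNReal.div_eq_inv_mul]; ring]
        rw [ENNReal.div_lt_iff (by norm_num) (by norm_num)]
        norm_num
      rw [one_mul] at hlt
      exact absurd (this.trans_lt hlt) (lt_irrefl _)
    obtain ⟨x, hxball, hxbad⟩ := hgood
    have hxE : x ∈ E := by
      by_contra h
      exact hxbad (Or.inl (Or.inl h))
    have hxa : ‖f x - f a‖ ≤ M * ‖x - a‖ := by
      by_contra h
      exact hxbad (Or.inl (Or.inr ⟨hxE, lt_of_not_ge h⟩))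
    have hxb : ‖f x - f b‖ ≤ M * ‖x - b‖ := by
      by_contra h
      exact hxbad (Or.inr ⟨hxE, lt_of_not_ge h⟩)
    have hxa2 : ‖x - a‖ ≤ 2 * r := by
      have h1 : dist x a ≤ dist x b + dist b a := dist_triangle _ _ _
      have h2 : dist x b < r := mem_ball.1 hxball
      rw [← dist_eq_norm]
      rw [dist_comm b a] at h1
      linarith
    have hxb2 : ‖x - b‖ ≤ r := by
      rw [← dist_eq_norm]
      exact (mem_ball.1 hxball).le
    calc dist (f a) (f b) ≤ dist (f a) (f x) + dist (f x) (f b) := dist_triangle _ _ _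
      _ = ‖f x - f a‖ + ‖f x - f b‖ := by rw [dist_comm (f a) (f x), dist_eq_norm,
          dist_eq_norm]
      _ ≤ M * (2 * r) + M * r := by
          gcongr
          · exact hxa.trans (by gcongr)
          · exact hxb.trans (by gcongr)
      _ = 3 * M * r := by ring
  -- almost every point of E lies in some good set
  have hae : ∀ᵐ a ∂μ, a ∈ E → ∃ M j, a ∈ G M j := by
    filter_upwards [hap, Besicovitch.ae_tendsto_measure_inter_div_of_measurableSet μ hE]
      with a ha hd haE
    obtain ⟨L, hL⟩ := ha haE
    -- density of E at a is one (for balls)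
    have hEdens : Tendsto (fun r : ℝ => μ (E ∩ ball a r) / μ (ball a r)) (𝓝[>] (0 : ℝ))
        (𝓝 1) := by
      apply AF.tendsto_ball_of_closedBall
      have : E.indicator (1 : V → ℝ≥0∞) a = 1 := by
        simp [indicator_of_mem haE]
      rw [← this]
      exact hd
    have hcompl : HasDensityAt μ Eᶜ a 0 :=
      AF.hasDensityAt_zero_of_disjoint hE hEdens disjoint_compl_left
    -- choose M
    set C : ℝ := ‖LinearMap.toContinuousLinearMap L‖ with hCdef
    have hC0 : 0 ≤ C := norm_nonneg _
    set M : ℕ := ⌈C⌉₊ + 1 with hMdef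
    have hMC : C + 1 ≤ M := by
      have := Nat.le_ceil C
      push_cast [hMdef]
      linarith
    have hSsub : S M a ⊆ {x | x ∈ E ∧ 1 * ‖x - a‖ < ‖f x - f a - L (x - a)‖} := by
      rintro x ⟨hxE, hx⟩
      refine ⟨hxE, ?_⟩
      have h1 : ‖f x - f a‖ ≤ ‖f x - f a - L (x - a)‖ + ‖L (x - a)‖ := by
        have := norm_add_le (f x - f a - L (x - a)) (L (x - a))
        simpa using this
      have h2 : ‖L (x - a)‖ ≤ C * ‖x - a‖ := by
        rw [hCdef]
        exact (LinearMap.toContinuousLinearMap L).le_opNorm (x - a)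
      have h3 : (0:ℝ) ≤ ‖x - a‖ := norm_nonneg _
      nlinarith
    have hSdens : HasDensityAt μ (S M a) a 0 :=
      AF.hasDensityAt_zero_mono hSsub (hL 1 one_pos)
    -- both ratios are eventually at most δ
    have hev : ∀ᶠ ρ in 𝓝[>] (0:ℝ), 0 < ρ →
        μ (S M a ∩ ball a ρ) ≤ δ * μ (ball a ρ) ∧ μ (Eᶜ ∩ ball a ρ) ≤ δ * μ (ball a ρ) := by
      filter_upwards [hSdens.eventually_lt_const hδ0, hcompl.eventually_lt_const hδ0]
        with ρ h1 h2 hρ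
      have hb0 : μ (ball a ρ) ≠ 0 := (AF.ball_pos a hρ).ne'
      have hbt : μ (ball a ρ) ≠ ∞ := AF.ball_ne_top a ρ
      constructor
      · exact le_of_lt ((ENNReal.div_lt_iff (Or.inl hb0) (Or.inl hbt)).1 h1)
      · exact le_of_lt ((ENNReal.div_lt_iff (Or.inl hb0) (Or.inl hbt)).1 h2)
    obtain ⟨u, hu0, husub⟩ := mem_nhdsGT_iff_exists_Ioo_subset.1 hev
    obtain ⟨j, hj⟩ := exists_nat_one_div_lt (mem_Ioi.1 hu0)
    refine ⟨M, j, haE, fun ρ hρ0 hρj => ?_⟩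
    have : ρ ∈ Ioo (0:ℝ) u := ⟨hρ0, by
      have : (1:ℝ) / (j + 1) < u := by exact_mod_cast hj
      linarith⟩
    exact husub this hρ0
  -- countable dense set and pieces
  obtain ⟨D, hDcount, hDdense⟩ := TopologicalSpace.exists_countable_dense V
  have : Nonempty D := (hDdense.nonempty).to_subtype
  have : Countable D := hDcount.to_subtype
  set ι := ℕ × ℕ × D with hιdef
  -- Lipschitz on pieces
  have hpieces : ∀ i : ι, ∃ g : V → V, (∃ K : ℝ≥0, LipschitzWith K g) ∧
      EqOn f g (G i.1 i.2.1 ∩ ball (i.2.2 : V) (1 / (4 * (i.2.1 + 1)))) := by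
    rintro ⟨M, j, q, hq⟩
    have hlip : LipschitzOnWith (3 * M : ℝ≥0) f
        (G M j ∩ ball q (1 / (4 * (j + 1)))) := by
      refine LipschitzOnWith.of_dist_le_mul fun x hx y hy => ?_
      have hd : dist x y < 1 / (2 * (j + 1)) := by
        have h1 : dist x q < 1 / (4 * (j + 1)) := mem_ball.1 hx.2
        have h2 : dist y q < 1 / (4 * (j + 1)) := mem_ball.1 hy.2
        have h3 : dist x y ≤ dist x q + dist y q := dist_triangle_right _ _ _
        have h4 : (1:ℝ) / (4 * (j + 1)) + 1 / (4 * (j + 1)) = 1 / (2 * (j+1)) := by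
          field_simp
          ring
        linarith
      have := key M j x y hx.1 hy.1 hd
      refine this.trans (le_of_eq ?_)
      push_cast
      ring
    -- extend to a global Lipschitz map
    obtain ⟨g0, hg0, heq0⟩ :=
      (((EuclideanSpace.equiv (Fin n) ℝ : V →L[ℝ] (Fin n → ℝ)).lipschitz).comp_lipschitzOnWith
        hlip).extend_pi
    refine ⟨fun x => (EuclideanSpace.equiv (Fin n) ℝ).symm (g0 x), ⟨_,
      ((EuclideanSpace.equiv (Fin n) ℝ).symm.lipschitz).comp hg0⟩, fun x hx => ?_⟩
    have := heq0 hx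
    simp only [comp_apply] at this
    show f x = (EuclideanSpace.equiv (Fin n) ℝ).symm (g0 x)
    rw [← this]
    simp
  choose gg hgglip hggeq using hpieces
  obtain ⟨e, he⟩ := exists_surjective_nat ι
  refine ⟨fun k => gg (e k), fun k => hgglip (e k), ?_⟩
  filter_upwards [hae] with a ha haE
  obtain ⟨M, j, hG⟩ := ha haE
  obtain ⟨q, hqD, hqa⟩ := hDdense.exists_dist_lt a (by positivity :
    (0:ℝ) < 1 / (4 * (j + 1)))
  obtain ⟨k, hk⟩ := he (M, j, ⟨q, hqD⟩)
  refine ⟨k, ?_⟩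
  rw [hk]
  exact hggeq (M, j, ⟨q, hqD⟩) ⟨hG, by simpa [mem_ball] using hqa⟩

/-- 3a: pointwise approximate differentiability at density points of Lipschitz pieces. -/
lemma AF.isApproxDifferential_of_piece {E B : Set V} (hB : MeasurableSet B)
    (hBE : B ⊆ E) {f g : V → V} (hfg : EqOn f g B) {a : V} (haB : a ∈ B)
    {D : V →L[ℝ] V} (hdiff : HasFDerivAt g D a)
    (hdens : Tendsto (fun r : ℝ => μ (B ∩ ball a r) / μ (ball a r)) (𝓝[>] (0 : ℝ)) (𝓝 1)) :
    IsApproxDifferential E f a (D : V →ₗ[ℝ] V) := by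
  intro ε hε
  set bad : Set V := {x ∈ E | ε * ‖x - a‖ < ‖f x - f a - D (x - a)‖} with hbaddef
  have hsub : bad ⊆ (E \ B) ∪ (bad ∩ B) := by
    intro x hx
    by_cases hxB : x ∈ B
    · exact Or.inr ⟨hx, hxB⟩
    · exact Or.inl ⟨hx.1, hxB⟩
  refine AF.hasDensityAt_zero_mono hsub (AF.hasDensityAt_zero_union ?_ ?_)
  · exact AF.hasDensityAt_zero_of_disjoint hB hdens disjoint_sdiff_left
  · -- bad ∩ B is empty near a
    have hlittle : ∀ᶠ x in 𝓝 a, ‖g x - g a - D (x - a)‖ ≤ ε * ‖x - a‖ := by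
      have h2 := hdiff.isLittleO.def hε
      simpa using h2
    obtain ⟨ρ, hρ0, hρ⟩ := Metric.eventually_nhds_iff.1 hlittle
    have hempty : ∀ r : ℝ, r ≤ ρ → (bad ∩ B) ∩ ball a r = ∅ := by
      intro r hr
      rw [eq_empty_iff_forall_notMem]
      rintro x ⟨⟨hxbad, hxB⟩, hxball⟩
      have hxρ : dist x a < ρ := lt_of_lt_of_le (mem_ball.1 hxball) hr
      have h1 : ‖g x - g a - D (x - a)‖ ≤ ε * ‖x - a‖ := hρ hxρ
      have h2 : f x = g x := hfg hxB
      have h3 : f a = g a := hfg haB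
      have hxlt : ε * ‖x - a‖ < ‖f x - f a - D (x - a)‖ := hxbad.2
      rw [h2, h3] at hxlt
      exact absurd hxlt (not_lt.2 h1)
    have : (fun r : ℝ => μ ((bad ∩ B) ∩ ball a r) / μ (ball a r))
        =ᶠ[𝓝[>] (0:ℝ)] (fun _ => (0:ℝ≥0∞)) := by
      filter_upwards [Ioo_mem_nhdsGT_of_mem (by exact ⟨le_refl (0:ℝ), hρ0⟩ :
        (0:ℝ) ∈ Ico 0 ρ)] with r hr
      rw [hempty r (le_of_lt hr.2), measure_empty, ENNReal.zero_div]
    exact Tendsto.congr' this.symm tendsto_const_nhds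

/-- 3b: measurable piecewise combination over a countable index. -/
lemma AF.measurable_piece {β : Type*} [MeasurableSpace β] {h : ℕ → V → β}
    (hh : ∀ k, Measurable (h k)) {N : V → ℕ} (hN : Measurable N) :
    Measurable fun x => h (N x) x := by
  have : (fun x => h (N x) x)
      = (fun p : V × ℕ => h p.2 p.1) ∘ fun x => (x, N x) := rfl
  rw [this]
  exact (measurable_from_prod_countable_left fun k => hh k).comp
    (measurable_id.prodMk hN)

/-- the multiplicity function of an injective piece, as an indicator -/
lemma AF.tsum_preimage_inj {P : Set V} {f : V → V} (hinj : InjOn f P) (u : V → ℝ≥0∞) :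
    (fun y => ∑' x : ↥(f ⁻¹' {y} ∩ P), u ↑x)
      = indicator (f '' P) (fun y => u (invFunOn f P y)) := by
  funext y
  by_cases hy : y ∈ f '' P
  · have hmem : ∃ x ∈ P, f x = y := by
      obtain ⟨x, hxP, hxy⟩ := hy
      exact ⟨x, hxP, hxy⟩
    have h1 : f ⁻¹' {y} ∩ P = {invFunOn f P y} := by
      ext x
      constructor
      · rintro ⟨hx1, hx2⟩
        have hfx : f x = y := hx1
        have : f x = f (invFunOn f P y) := by rw [hfx, invFunOn_eq hmem]
        exact hinj hx2 (invFunOn_mem hmem) this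
      · rintro rfl
        exact ⟨by simp [invFunOn_eq hmem], invFunOn_mem hmem⟩
    rw [h1, tsum_singleton, indicator_of_mem hy]
  · have h1 : f ⁻¹' {y} ∩ P = ∅ := by
      rw [eq_empty_iff_forall_notMem]
      rintro x ⟨hx1, hx2⟩
      exact hy ⟨x, hx2, hx1⟩
    rw [h1, indicator_of_notMem hy]
    exact tsum_empty

/-- 3c, measurability part -/
lemma AF.measurable_multiplicity {P : Set V} (hP : MeasurableSet P) {f : V → V}
    (hcont : ContinuousOn f P) (hinj : InjOn f P) {u : V → ℝ≥0∞} (hu : Measurable u) :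
    Measurable (fun y => ∑' x : ↥(f ⁻¹' {y} ∩ P), u ↑x) := by
  classical
  rw [AF.tsum_preimage_inj hinj u]
  intro t ht
  have him : MeasurableSet (f '' (P ∩ u ⁻¹' t)) :=
    (hP.inter (hu ht)).image_of_continuousOn_injOn
      (hcont.mono inter_subset_left) (hinj.mono inter_subset_left)
  have himP : MeasurableSet (f '' P) :=
    hP.image_of_continuousOn_injOn hcont hinj
  have : indicator (f '' P) (fun y => u (invFunOn f P y)) ⁻¹' t
      = f '' (P ∩ u ⁻¹' t) ∪ (if (0:ℝ≥0∞) ∈ t then (f '' P)ᶜ else ∅) := by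
    ext y
    simp only [mem_preimage, mem_union]
    constructor
    · intro hyt
      by_cases hy : y ∈ f '' P
      · rw [indicator_of_mem hy] at hyt
        refine Or.inl ?_
        obtain ⟨x, hxP, hxy⟩ := hy
        have hmem : ∃ x ∈ P, f x = y := ⟨x, hxP, hxy⟩
        exact ⟨invFunOn f P y, ⟨invFunOn_mem hmem, hyt⟩, invFunOn_eq hmem⟩
      · rw [indicator_of_notMem hy] at hyt
        rw [if_pos hyt]
        exact Or.inr hy
    · intro hy
      rcases hy with ⟨x, ⟨hxP, hxt⟩, rfl⟩ | hy
      · have hmem1 : f x ∈ f '' P := mem_image_of_mem f hxP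
        rw [indicator_of_mem hmem1]
        have : invFunOn f P (f x) = x := hinj.leftInvOn_invFunOn hxP
        rwa [this]
      · by_cases h0 : (0:ℝ≥0∞) ∈ t
        · rw [if_pos h0] at hy
          rw [indicator_of_notMem hy]
          exact h0
        · rw [if_neg h0] at hy
          exact absurd hy (notMem_empty y)
  rw [this]
  refine him.union ?_
  split_ifs
  · exact himP.compl
  · exact MeasurableSet.empty

/-- 3c: change of variables on an injective piece. -/
lemma AF.lintegral_piece_inj {P : Set V} (hP : MeasurableSet P) {f : V → V}
    {D : V → V →L[ℝ] V} (hder : ∀ x ∈ P, HasFDerivWithinAt f (D x) P x)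
    (hinj : InjOn f P) (u : V → ℝ≥0∞) :
    ∫⁻ x in P, u x * ENNReal.ofReal |(D x).det| ∂μ
      = ∫⁻ y, (∑' x : ↥(f ⁻¹' {y} ∩ P), u ↑x) ∂μ := by
  have himP : MeasurableSet (f '' P) :=
    hP.image_of_continuousOn_injOn (fun x hx => (hder x hx).continuousWithinAt) hinj
  rw [AF.tsum_preimage_inj hinj u, lintegral_indicator himP,
    lintegral_image_eq_lintegral_abs_det_fderiv_mul μ hP hder hinj
      (fun y => u (invFunOn f P y))]
  refine setLIntegral_congr_fun_ae hP (ae_of_all _ fun x hx => ?_)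
  rw [hinj.leftInvOn_invFunOn hx, mul_comm]

/-- 3d: pieces with vanishing Jacobian do not contribute to the right-hand side. -/
lemma AF.lintegral_piece_null {P : Set V} {f : V → V}
    {D : V → V →L[ℝ] V} (hder : ∀ x ∈ P, HasFDerivWithinAt f (D x) P x)
    (hdet : ∀ x ∈ P, (D x).det = 0) (u : V → ℝ≥0∞) :
    (fun y => ∑' x : ↥(f ⁻¹' {y} ∩ P), u ↑x) =ᵐ[μ] (fun _ => (0:ℝ≥0∞)) := by
  have him0 : μ (f '' P) = 0 :=
    addHaar_image_eq_zero_of_det_fderivWithin_eq_zero μ hder hdet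
  have hae : ∀ᵐ y ∂μ, y ∉ f '' P := measure_eq_zero_iff_ae_notMem.1 him0
  filter_upwards [hae] with y hy
  have h1 : f ⁻¹' {y} ∩ P = ∅ := by
    rw [eq_empty_iff_forall_notMem]
    rintro x ⟨hx1, hx2⟩
    exact hy ⟨x, hx2, hx1⟩
  rw [h1]
  exact tsum_empty

/-- 3e: determinant compatibility for `toEuclideanLin.symm`. -/
lemma AF.det_toEuclideanLin_symm (T : V →L[ℝ] V) :
    (Matrix.toEuclideanLin.symm (T : V →ₗ[ℝ] V)).det = T.det := by
  have h : (T : V →ₗ[ℝ] V)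
      = Matrix.toEuclideanLin (Matrix.toEuclideanLin.symm (T : V →ₗ[ℝ] V)) :=
    (Matrix.toEuclideanLin.apply_symm_apply _).symm
  show _ = LinearMap.det (T : V →ₗ[ℝ] V)
  conv_rhs => rw [h]
  rw [Matrix.toEuclideanLin_eq_toLin, LinearMap.det_toLin]

/-- matrix entries via `toEuclideanLin` -/
lemma AF.matrix_entry (M : Matrix (Fin n) (Fin n) ℝ) (i j : Fin n) :
    M i j = Matrix.toEuclideanLin M (EuclideanSpace.single j (1:ℝ)) i := by
  have h1 : Matrix.toEuclideanLin M (EuclideanSpace.single j (1:ℝ))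
      = (WithLp.equiv 2 (Fin n → ℝ)).symm (Matrix.mulVec M (Pi.single j 1)) := by
    rw [Matrix.toEuclideanLin_apply]; rfl
  rw [h1]
  show M i j = Matrix.mulVec M (Pi.single j 1) i
  simp [Matrix.mulVec_single]

/-- the injectivity radius function for the partition argument -/
noncomputable def AF.rfun (A : EuclideanSpace ℝ (Fin n) →L[ℝ] EuclideanSpace ℝ (Fin n)) :
    ℝ≥0 :=
  letI := Classical.dec
  if h : A.det ≠ 0 ∧ Nontrivial (EuclideanSpace ℝ (Fin n)) then
    (2 * ‖(((A.toContinuousLinearEquivOfDetNeZero h.1).symm : V ≃L[ℝ] V) : V →L[ℝ] V)‖₊)⁻¹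
  else 1

lemma AF.rfun_pos (A : V →L[ℝ] V) : AF.rfun A ≠ 0 := by
  rw [AF.rfun]
  split_ifs with h
  · obtain ⟨hdet, hnt⟩ := h
    set B := A.toContinuousLinearEquivOfDetNeZero hdet
    have hB : ((B.symm : V ≃L[ℝ] V) : V →L[ℝ] V) ≠ 0 := by
      intro h0
      obtain ⟨x, hx⟩ := exists_ne (0 : V)
      have : B.symm (B x) = 0 := by
        have : ((B.symm : V ≃L[ℝ] V) : V →L[ℝ] V) (B x) = 0 := by rw [h0]; rfl
        simpa using this
      simp only [ContinuousLinearEquiv.symm_apply_apply] at this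
      exact hx this
    have hn0 : ‖((B.symm : V ≃L[ℝ] V) : V →L[ℝ] V)‖₊ ≠ 0 := by
      simpa [nnnorm_eq_zero] using hB
    simp only [ne_eq, inv_eq_zero, mul_eq_zero]
    push_neg
    exact ⟨by norm_num, hn0⟩
  · norm_num

lemma AF.rfun_inj {A : V →L[ℝ] V} (hdet : A.det ≠ 0) {s : Set V} {f : V → V}
    (happrox : ApproximatesLinearOn f A s (AF.rfun A)) : InjOn f s := by
  set B := A.toContinuousLinearEquivOfDetNeZero hdet with hBdef
  have hcoe : ((B : V ≃L[ℝ] V) : V →L[ℝ] V) = A :=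
    ContinuousLinearMap.coe_toContinuousLinearEquivOfDetNeZero _ _
  have happrox' : ApproximatesLinearOn f ((B : V ≃L[ℝ] V) : V →L[ℝ] V) s (AF.rfun A) := by
    rwa [hcoe]
  rcases subsingleton_or_nontrivial V with hsub | hnt
  · exact happrox'.injOn (Or.inl hsub)
  · refine happrox'.injOn (Or.inr ?_)
    have hr : AF.rfun A
        = (2 * ‖((B.symm : V ≃L[ℝ] V) : V →L[ℝ] V)‖₊)⁻¹ := by
      rw [AF.rfun, dif_pos ⟨hdet, hnt⟩]
    rw [hr]
    have hB : ((B.symm : V ≃L[ℝ] V) : V →L[ℝ] V) ≠ 0 := by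
      intro h0
      obtain ⟨x, hx⟩ := exists_ne (0 : V)
      have : B.symm (B x) = 0 := by
        have : ((B.symm : V ≃L[ℝ] V) : V →L[ℝ] V) (B x) = 0 := by rw [h0]; rfl
        simpa using this
      simp only [ContinuousLinearEquiv.symm_apply_apply] at this
      exact hx this
    have hn0 : ‖((B.symm : V ≃L[ℝ] V) : V →L[ℝ] V)‖₊ ≠ 0 := by
      simpa [nnnorm_eq_zero] using hB
    refine NNReal.inv_lt_inv (by positivity) ?_
    have hpos : (0:ℝ≥0) < ‖((B.symm : V ≃L[ℝ] V) : V →L[ℝ] V)‖₊ := pos_iff_ne_zero.2 hn0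
    calc ‖((B.symm : V ≃L[ℝ] V) : V →L[ℝ] V)‖₊
        = 1 * ‖((B.symm : V ≃L[ℝ] V) : V →L[ℝ] V)‖₊ := (one_mul _).symm
      _ < 2 * ‖((B.symm : V ≃L[ℝ] V) : V →L[ℝ] V)‖₊ :=
          mul_lt_mul_of_pos_right one_lt_two hpos
  
/-- tsum over a disjoint countable union inside an intersection -/
lemma AF.tsum_inter_iUnion {ι : Type*} [Countable ι] {C : ι → Set V}
    (hdisj : Pairwise (Disjoint on C)) (T : Set V) (u : V → ℝ≥0∞) :
    ∑' x : ↥(T ∩ ⋃ k, C k), u ↑x = ∑' k, ∑' x : ↥(T ∩ C k), u ↑x := by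
  rw [tsum_subtype]
  have hpt : ∀ x, (T ∩ ⋃ k, C k).indicator u x = ∑' k, (T ∩ C k).indicator u x := by
    intro x
    by_cases hx : x ∈ T ∩ ⋃ k, C k
    · obtain ⟨hxT, hxU⟩ := hx
      obtain ⟨k₀, hk₀⟩ := mem_iUnion.1 hxU
      have hmem1 : x ∈ T ∩ ⋃ k, C k := mem_inter hxT hxU
      rw [indicator_of_mem hmem1]
      rw [tsum_eq_single k₀]
      · have hmem2 : x ∈ T ∩ C k₀ := mem_inter hxT hk₀
        rw [indicator_of_mem hmem2]
      · intro k hk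
        refine indicator_of_notMem (fun hmem => ?_) _
        exact (hdisj hk).ne_of_mem hmem.2 hk₀ rfl
    · rw [indicator_of_notMem hx]
      rw [eq_comm]
      refine ENNReal.tsum_eq_zero.2 fun k => ?_
      refine indicator_of_notMem (fun hmem => ?_) _
      exact hx ⟨hmem.1, mem_iUnion.2 ⟨k, hmem.2⟩⟩
  rw [tsum_congr hpt, ENNReal.tsum_comm]
  congr 1
  funext k
  rw [← tsum_subtype]

end AuxAF

set_option maxHeartbeats 2000000 in
/-- Area formula for a.e. approximately differentiable mappings `ℝⁿ → ℝⁿ`. -/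
theorem area_formula_of_approx_differentiable {n : ℕ}
    (E : Set (EuclideanSpace ℝ (Fin n))) (hE : MeasurableSet E)
    (f : EuclideanSpace ℝ (Fin n) → EuclideanSpace ℝ (Fin n))
    (hf : Measurable (fun x : E => f x))
    (hap : ∀ᵐ a ∂volume, a ∈ E →
      ∃ L : EuclideanSpace ℝ (Fin n) →ₗ[ℝ] EuclideanSpace ℝ (Fin n),
        IsApproxDifferential E f a L) :
    ∃ Z ⊆ E, volume Z = 0 ∧
      ∃ L : EuclideanSpace ℝ (Fin n) → Matrix (Fin n) (Fin n) ℝ,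
        (∀ i j, Measurable fun x => L x i j) ∧
        (∀ x ∈ E \ Z, IsApproxDifferential E f x (Matrix.toEuclideanLin (L x))) ∧
        ∀ u : EuclideanSpace ℝ (Fin n) → ℝ≥0∞, Measurable u →
          ∫⁻ x in E, u x * ENNReal.ofReal |(L x).det| ∂volume
            = ∫⁻ y, (∑' x : ↥(f ⁻¹' {y} ∩ (E \ Z)), u ↑x) ∂volume := by
  classical
  obtain ⟨g, hglip, hgcov⟩ := AF.exists_lipschitz_cover hE hap
  -- coincidence sets
  have hA0meas : ∀ k, MeasurableSet {x | x ∈ E ∧ f x = g k x} := by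
    intro k
    obtain ⟨K, hK⟩ := hglip k
    have hsub : MeasurableSet {z : E | f ↑z = g k ↑z} := by
      have hmeas : Measurable fun z : E => f ↑z - g k ↑z :=
        hf.sub (hK.continuous.measurable.comp measurable_subtype_coe)
      have heq : {z : E | f ↑z = g k ↑z} = (fun z : E => f ↑z - g k ↑z) ⁻¹' {0} := by
        ext z; simp [sub_eq_zero]
      rw [heq]
      exact hmeas (measurableSet_singleton 0)
    have heq : {x | x ∈ E ∧ f x = g k x} = (Subtype.val : E → EuclideanSpace ℝ (Fin n)) '' {z : E | f ↑z = g k ↑z} := by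
      ext x
      constructor
      · rintro ⟨hxE, hxy⟩
        exact ⟨⟨x, hxE⟩, hxy, rfl⟩
      · rintro ⟨z, hz, rfl⟩
        exact ⟨z.2, hz⟩
    rw [heq]
    exact hE.subtype_image hsub
  set A0 : ℕ → Set (EuclideanSpace ℝ (Fin n)) := fun k => {x | x ∈ E ∧ f x = g k x} with hA0
  set A : ℕ → Set (EuclideanSpace ℝ (Fin n)) := fun k => A0 k \ ⋃ i, ⋃ (_ : i < k), A0 i with hA
  have hAmeas : ∀ k, MeasurableSet (A k) := fun k =>
    (hA0meas k).diff (MeasurableSet.biUnion (to_countable _) fun i _ => hA0meas i)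
  have hAsub : ∀ k, A k ⊆ A0 k := fun k => diff_subset
  have hAdisj : Pairwise (Disjoint on A) := by
    have key : ∀ i j, i < j → Disjoint (A i) (A j) := by
      intro i j hij
      rw [disjoint_left]
      intro x hxi hxj
      exact hxj.2 (mem_iUnion₂.2 ⟨i, hij, hAsub i hxi⟩)
    intro i j hne
    rcases lt_or_gt_of_ne hne with h | h
    · exact key i j h
    · exact (key j i h).symm
  have hAcup : ⋃ k, A k = ⋃ k, A0 k := by
    refine subset_antisymm (iUnion_mono fun k => hAsub k) fun x hx => ?_
    obtain ⟨m, hm⟩ := mem_iUnion.1 hx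
    have hex : ∃ m, x ∈ A0 m := ⟨m, hm⟩
    refine mem_iUnion.2 ⟨Nat.find hex, Nat.find_spec hex, fun hmem => ?_⟩
    obtain ⟨i, hi, hxi⟩ := mem_iUnion₂.1 hmem
    exact Nat.find_min hex hi hxi
  -- differentiability pieces
  set B : ℕ → Set (EuclideanSpace ℝ (Fin n)) := fun k => A k ∩ {x | DifferentiableAt ℝ (g k) x} with hB
  have hBmeas : ∀ k, MeasurableSet (B k) := fun k =>
    (hAmeas k).inter (measurableSet_of_differentiableAt ℝ (g k))
  -- remove non-density points
  have hNex : ∀ k, ∃ Nk : Set (EuclideanSpace ℝ (Fin n)), MeasurableSet Nk ∧ volume Nk = 0 ∧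
      ∀ x ∈ B k \ Nk, Tendsto (fun r : ℝ => volume (B k ∩ ball x r) / volume (ball x r))
        (𝓝[>] (0:ℝ)) (𝓝 1) := by
    intro k
    have hd := Besicovitch.ae_tendsto_measure_inter_div_of_measurableSet volume (hBmeas k)
    set T := {x : EuclideanSpace ℝ (Fin n) | ¬ Tendsto
      (fun r => volume (B k ∩ closedBall x r) / volume (closedBall x r)) (𝓝[>] (0:ℝ))
      (𝓝 ((B k).indicator 1 x))} with hT
    have hT0 : volume T = 0 := by
      rw [hT, ← ae_iff]
      exact hd
    refine ⟨toMeasurable volume T, measurableSet_toMeasurable _ _, by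
      rw [measure_toMeasurable]; exact hT0, ?_⟩
    rintro x ⟨hxB, hxN⟩
    have hP : Tendsto (fun r => volume (B k ∩ closedBall x r) / volume (closedBall x r))
        (𝓝[>] (0:ℝ)) (𝓝 ((B k).indicator 1 x)) := by
      by_contra h
      exact hxN (subset_toMeasurable _ _ h)
    have hind : (B k).indicator (1 : EuclideanSpace ℝ (Fin n) → ℝ≥0∞) x = 1 := indicator_of_mem hxB 1
    rw [hind] at hP
    exact AF.tendsto_ball_of_closedBall hP
  choose NN hNNmeas hNNnull hNNdens using hNex
  set C : ℕ → Set (EuclideanSpace ℝ (Fin n)) := fun k => B k \ NN k with hC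
  have hCmeas : ∀ k, MeasurableSet (C k) := fun k => (hBmeas k).diff (hNNmeas k)
  have hCB : ∀ k, C k ⊆ B k := fun k => diff_subset
  have hCA : ∀ k, C k ⊆ A k := fun k => (hCB k).trans inter_subset_left
  have hCdisj : Pairwise (Disjoint on C) := fun i j hne =>
    (hAdisj hne).mono (hCA i) (hCA j)
  have hCE : ∀ k, C k ⊆ E := fun k x hx => (hAsub k (hCA k hx)).1
  have hBeq : ∀ k, EqOn f (g k) (B k) := fun k x hx => (hAsub k hx.1).2
  -- derivative family
  set D : ℕ → EuclideanSpace ℝ (Fin n) → (EuclideanSpace ℝ (Fin n) →L[ℝ] EuclideanSpace ℝ (Fin n)) := fun k x => fderiv ℝ (g k) x with hD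
  have hCder : ∀ k, ∀ x ∈ C k, HasFDerivWithinAt f (D k x) (C k) x := by
    intro k x hx
    have hdiff : DifferentiableAt ℝ (g k) x := (hCB k hx).2
    have h1 : HasFDerivWithinAt (g k) (D k x) (C k) x :=
      (hdiff.hasFDerivAt).hasFDerivWithinAt
    exact h1.congr (fun y hy => hBeq k (hCB k hy)) (hBeq k (hCB k hx))
  -- index function
  set N : EuclideanSpace ℝ (Fin n) → ℕ := fun x => if h : ∃ k, x ∈ C k then Nat.find h else 0 with hN
  have hNval : ∀ k, ∀ x ∈ C k, N x = k := by
    intro k x hx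
    have hex : ∃ k, x ∈ C k := ⟨k, hx⟩
    rw [hN]
    simp only [dif_pos hex]
    have h1 := Nat.find_spec hex
    by_contra hne
    exact (hCdisj hne).ne_of_mem h1 hx rfl
  have hNmeas : Measurable N := by
    apply measurable_to_countable'
    intro k
    have hpre : N ⁻¹' {k} = if k = 0 then C 0 ∪ (⋃ m, C m)ᶜ else C k := by
      ext x
      simp only [mem_preimage, mem_singleton_iff]
      constructor
      · intro hNx
        by_cases hex : ∃ m, x ∈ C m
        · have hxC : x ∈ C (N x) := by
            rw [hN]; simp only [dif_pos hex]; exact Nat.find_spec hex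
          rw [hNx] at hxC
          split_ifs with h0
          · exact Or.inl (h0 ▸ hxC)
          · exact hxC
        · have hNx0 : N x = 0 := by rw [hN]; simp only [dif_neg hex]
          rw [← hNx, hNx0]
          simp only [if_pos rfl]
          exact Or.inr (by simpa using fun m hm => hex ⟨m, hm⟩)
      · intro hx
        split_ifs at hx with h0
        · subst h0
          rcases hx with hx | hx
          · exact hNval 0 x hx
          · rw [hN]
            have : ¬ ∃ m, x ∈ C m := by simpa using fun m hm => (by
              exact absurd (mem_iUnion.2 ⟨m, hm⟩) (by simpa using hx))
            simp only [dif_neg this]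
        · exact hNval k x hx
    rw [hpre]
    split_ifs
    · exact (hCmeas 0).union (MeasurableSet.iUnion hCmeas).compl
    · exact hCmeas k
  -- the matrix field
  set L : EuclideanSpace ℝ (Fin n) → Matrix (Fin n) (Fin n) ℝ :=
    fun x => Matrix.toEuclideanLin.symm ((D (N x) x : EuclideanSpace ℝ (Fin n) →ₗ[ℝ] EuclideanSpace ℝ (Fin n))) with hL
  have hLval : ∀ k, ∀ x ∈ C k, Matrix.toEuclideanLin (L x) = (D k x : EuclideanSpace ℝ (Fin n) →ₗ[ℝ] EuclideanSpace ℝ (Fin n)) := by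
    intro k x hx
    rw [hL]
    simp only [hNval k x hx, LinearEquiv.apply_symm_apply]
  have hLdet : ∀ k, ∀ x ∈ C k, (L x).det = (D k x).det := by
    intro k x hx
    rw [hL]
    simp only [hNval k x hx]
    exact AF.det_toEuclideanLin_symm _
  have hLmeas : ∀ i j, Measurable fun x => L x i j := by
    intro i j
    have hentry : (fun x => L x i j)
        = fun x => (D (N x) x) (EuclideanSpace.single j (1:ℝ)) i := by
      funext x
      rw [hL]
      simp only
      rw [AF.matrix_entry (Matrix.toEuclideanLin.symm ((D (N x) x : EuclideanSpace ℝ (Fin n) →ₗ[ℝ] EuclideanSpace ℝ (Fin n)))) i j,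
        LinearEquiv.apply_symm_apply]
      rfl
    rw [hentry]
    refine AF.measurable_piece
      (h := fun k x => (D k x) (EuclideanSpace.single j (1:ℝ)) i) (fun k => ?_) hNmeas
    have h1 : Measurable fun x => (D k x) (EuclideanSpace.single j (1:ℝ)) :=
      measurable_fderiv_apply_const ℝ (g k) _
    exact ((EuclideanSpace.proj i : EuclideanSpace ℝ (Fin n) →L[ℝ] ℝ).continuous.measurable).comp h1
  -- the null set
  set Z := E \ ⋃ k, C k with hZ
  have hUE : (⋃ k, C k) ⊆ E := iUnion_subset hCE
  have hZE : Z ⊆ E := diff_subset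
  have hZ0 : volume Z = 0 := by
    have hcov : Z ⊆ (E \ ⋃ k, A0 k) ∪ ⋃ k, ((A k \ B k) ∪ NN k) := by
      rintro x ⟨hxE, hxC⟩
      by_cases hx0 : x ∈ ⋃ k, A0 k
      · right
        rw [← hAcup] at hx0
        obtain ⟨k, hk⟩ := mem_iUnion.1 hx0
        refine mem_iUnion.2 ⟨k, ?_⟩
        by_cases hxB : x ∈ B k
        · right
          by_contra hxNN
          exact hxC (mem_iUnion.2 ⟨k, hxB, hxNN⟩)
        · exact Or.inl ⟨hk, hxB⟩
      · exact Or.inl ⟨hxE, hx0⟩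
    refine measure_mono_null hcov (measure_union_null ?_ (measure_iUnion_null fun k =>
      measure_union_null ?_ (hNNnull k)))
    · refine measure_eq_zero_iff_ae_notMem.2 ?_
      filter_upwards [hgcov] with x hx
      rintro ⟨hxE, hxA⟩
      obtain ⟨k, hk⟩ := hx hxE
      exact hxA (mem_iUnion.2 ⟨k, ⟨hxE, hk⟩⟩)
    · obtain ⟨K, hK⟩ := hglip k
      refine measure_eq_zero_iff_ae_notMem.2 ?_
      filter_upwards [hK.ae_differentiableAt (μ := volume)] with x hx
      rintro ⟨hxA, hxB⟩
      exact hxB ⟨hxA, hx⟩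
  have hEZ : E \ Z = ⋃ k, C k := by
    rw [hZ]
    exact diff_diff_cancel_left hUE
  -- approximate differentials
  have happrox : ∀ x ∈ E \ Z, IsApproxDifferential E f x (Matrix.toEuclideanLin (L x)) := by
    intro x hx
    rw [hEZ] at hx
    obtain ⟨k, hk⟩ := mem_iUnion.1 hx
    rw [hLval k x hk]
    have hdiff : HasFDerivAt (g k) (D k x) x := ((hCB k hk).2).hasFDerivAt
    exact AF.isApproxDifferential_of_piece (hBmeas k) (fun y hy => (hAsub k hy.1).1)
      (hBeq k) (hCB k hk) hdiff (hNNdens k x ⟨(hCB k hk), hk.2⟩)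
  -- partition by determinant / injectivity
  have hdetmeas : ∀ k, Measurable fun x => (D k x).det := fun k =>
    ContinuousLinearMap.continuous_det.measurable.comp (measurable_fderiv ℝ (g k))
  set s0 : ℕ → Set (EuclideanSpace ℝ (Fin n)) := fun k => C k ∩ {x | (D k x).det ≠ 0} with hs0
  set s1 : ℕ → Set (EuclideanSpace ℝ (Fin n)) := fun k => C k ∩ {x | (D k x).det = 0} with hs1
  have hdet0set : ∀ k, MeasurableSet {x | (D k x).det = 0} := by
    intro k
    have : {x | (D k x).det = 0} = (fun x => (D k x).det) ⁻¹' {0} := rfl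
    rw [this]
    exact (hdetmeas k) (measurableSet_singleton 0)
  have hs0m : ∀ k, MeasurableSet (s0 k) := fun k => (hCmeas k).inter (by
    have : {x | (D k x).det ≠ 0} = {x | (D k x).det = 0}ᶜ := by ext x; simp
    rw [this]
    exact (hdet0set k).compl)
  have hs1m : ∀ k, MeasurableSet (s1 k) := fun k => (hCmeas k).inter (hdet0set k)
  have hpart : ∀ k, ∃ t : ℕ → Set (EuclideanSpace ℝ (Fin n)), Pairwise (Disjoint on t) ∧
      (∀ m, MeasurableSet (t m)) ∧ (s0 k ⊆ ⋃ m, t m) ∧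
      (∀ m, InjOn f (s0 k ∩ t m)) := by
    intro k
    have hder0 : ∀ x ∈ s0 k, HasFDerivWithinAt f (D k x) (s0 k) x := fun x hx =>
      (hCder k x hx.1).mono inter_subset_left
    obtain ⟨t, Am, htdisj, htmeas, htcover, happx, hAy⟩ :=
      exists_partition_approximatesLinearOn_of_hasFDerivWithinAt f (s0 k)
        (fun x => D k x) hder0 AF.rfun (fun A => AF.rfun_pos A)
    refine ⟨t, htdisj, htmeas, htcover, fun m => ?_⟩
    rcases eq_empty_or_nonempty (s0 k) with he | hne
    · rw [he, empty_inter]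
      exact injOn_empty f
    · obtain ⟨y, hy, hAy'⟩ := hAy hne m
      refine AF.rfun_inj ?_ (happx m)
      rw [hAy']
      exact hy.2
  choose tt htdisj htmeas htcover htinj using hpart
  -- final pieces
  set P : ℕ → ℕ → Set (EuclideanSpace ℝ (Fin n)) := fun k m => match m with
    | 0 => s1 k
    | (m+1) => s0 k ∩ tt k m
    with hP
  have hP0 : ∀ k, P k 0 = s1 k := fun k => rfl
  have hPS : ∀ k m, P k (m+1) = s0 k ∩ tt k m := fun k m => rfl
  have hPmeas : ∀ k m, MeasurableSet (P k m) := by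
    intro k m
    cases m with
    | zero => exact hs1m k
    | succ m => exact (hs0m k).inter (htmeas k m)
  have hPsub : ∀ k m, P k m ⊆ C k := by
    intro k m
    cases m with
    | zero => exact inter_subset_left
    | succ m => exact inter_subset_left.trans inter_subset_left
  have hPdisj : ∀ k, Pairwise (Disjoint on (P k)) := by
    intro k i j hne
    have hkey : Disjoint (s1 k) (s0 k) := by
      rw [disjoint_left]
      rintro x ⟨_, hx2⟩ ⟨_, hx4⟩
      exact hx4 hx2
    cases i with
    | zero => cases j with
      | zero => exact absurd rfl hne
      | succ j => exact (hkey.mono_right inter_subset_left :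
          Disjoint (P k 0) (s0 k ∩ tt k j))
    | succ i => cases j with
      | zero => exact ((hkey.mono_right inter_subset_left).symm :
          Disjoint (s0 k ∩ tt k i) (P k 0))
      | succ j =>
          have hij : i ≠ j := by omega
          exact (htdisj k hij).mono inter_subset_right inter_subset_right
  have hPcup : ∀ k, ⋃ m, P k m = C k := by
    intro k
    refine subset_antisymm (iUnion_subset fun m => hPsub k m) fun x hx => ?_
    by_cases hdet : (D k x).det = 0
    · exact mem_iUnion.2 ⟨0, ⟨hx, hdet⟩⟩
    · have hx0 : x ∈ s0 k := ⟨hx, hdet⟩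
      obtain ⟨m, hm⟩ := mem_iUnion.1 (htcover k hx0)
      exact mem_iUnion.2 ⟨m + 1, ⟨hx0, hm⟩⟩
  have hPder : ∀ k m, ∀ x ∈ P k m, HasFDerivWithinAt f (D k x) (P k m) x := fun k m x hx =>
    (hCder k x (hPsub k m hx)).mono (hPsub k m)
  -- conclusion
  refine ⟨Z, hZE, hZ0, L, hLmeas, happrox, ?_⟩
  intro u hu
  have hpiece : ∀ k m,
      (∫⁻ x in P k m, u x * ENNReal.ofReal |(D k x).det| ∂volume
        = ∫⁻ y, (∑' x : ↥(f ⁻¹' {y} ∩ P k m), u ↑x) ∂volume) ∧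
      AEMeasurable (fun y => ∑' x : ↥(f ⁻¹' {y} ∩ P k m), u ↑x) volume := by
    intro k m
    cases m with
    | zero =>
      have h0 : ∀ x ∈ P k 0, (D k x).det = 0 := fun x hx => hx.2
      have hnull := AF.lintegral_piece_null (hPder k 0) h0 u
      have hzero : ∫⁻ x in P k 0, u x * ENNReal.ofReal |(D k x).det| ∂volume = 0 := by
        have hae0 : ∀ᵐ x ∂volume, x ∈ P k 0 →
            u x * ENNReal.ofReal |(D k x).det| = (fun _ => (0:ℝ≥0∞)) x :=
          ae_of_all _ fun x hx => by rw [h0 x hx]; simp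
        rw [setLIntegral_congr_fun_ae (hPmeas k 0) hae0]
        exact lintegral_zero
      constructor
      · rw [hzero, lintegral_congr_ae hnull, lintegral_zero]
      · exact (measurable_const.aemeasurable (μ := volume)).congr hnull.symm
    | succ m =>
      have hinj := htinj k m
      have hcont : ContinuousOn f (P k (m+1)) := fun x hx =>
        (hPder k (m+1) x hx).continuousWithinAt
      exact ⟨AF.lintegral_piece_inj (hPmeas k (m+1)) (hPder k (m+1)) hinj u,
        (AF.measurable_multiplicity (hPmeas k (m+1)) hcont hinj hu).aemeasurable⟩
  calc ∫⁻ x in E, u x * ENNReal.ofReal |(L x).det| ∂volume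
      = ∫⁻ x in ⋃ k, C k, u x * ENNReal.ofReal |(L x).det| ∂volume := by
        refine setLIntegral_congr ?_
        refine (ae_eq_set.2 ⟨?_, ?_⟩)
        · exact hZ0
        · rw [diff_eq_empty.2 hUE]
          exact measure_empty
    _ = ∑' k, ∫⁻ x in C k, u x * ENNReal.ofReal |(L x).det| ∂volume :=
        lintegral_iUnion hCmeas hCdisj _
    _ = ∑' k, ∑' m, ∫⁻ x in P k m, u x * ENNReal.ofReal |(D k x).det| ∂volume := by
        refine tsum_congr fun k => ?_
        rw [← hPcup k, lintegral_iUnion (hPmeas k) (hPdisj k)]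
        refine tsum_congr fun m => ?_
        refine setLIntegral_congr_fun_ae (hPmeas k m) (ae_of_all _ fun x hx => ?_)
        rw [hLdet k x (hPsub k m hx)]
    _ = ∑' k, ∑' m, ∫⁻ y, (∑' x : ↥(f ⁻¹' {y} ∩ P k m), u ↑x) ∂volume :=
        tsum_congr fun k => tsum_congr fun m => (hpiece k m).1
    _ = ∑' k, ∫⁻ y, ∑' m, (∑' x : ↥(f ⁻¹' {y} ∩ P k m), u ↑x) ∂volume :=
        tsum_congr fun k => (lintegral_tsum fun m => (hpiece k m).2).symm
    _ = ∫⁻ y, ∑' k, ∑' m, (∑' x : ↥(f ⁻¹' {y} ∩ P k m), u ↑x) ∂volume :=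
        (lintegral_tsum fun k => AEMeasurable.ennreal_tsum fun m => (hpiece k m).2).symm
    _ = ∫⁻ y, (∑' x : ↥(f ⁻¹' {y} ∩ (E \ Z)), u ↑x) ∂volume := by
        refine lintegral_congr fun y => ?_
        rw [hEZ, AF.tsum_inter_iUnion hCdisj (f ⁻¹' {y}) u]
        refine (tsum_congr fun k => ?_).symm
        rw [← hPcup k, AF.tsum_inter_iUnion (hPdisj k) (f ⁻¹' {y}) u]
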